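/- Let τ = (1+√5)/2 and let W_a, W_b be nonempty compact subsets of ℝ satisfying W_a = τ⁻²·W_a ∪ τ⁻²·(W_a − τ) ∪ τ⁻²·(W_b + τ²) and W_b = τ⁻²·(W_a − 2τ) ∪ τ⁻²·W_b. Then the interiors of W_a and W_b are disjoint: int(W_a) ∩ int(W_b) = ∅. -/

import Mathlib

open MeasureTheory Set

private lemma vol_affine (c d : ℝ) (hc : 0 < c) (S : Set ℝ) :
    volume ((fun x => c * (x + d)) '' S) = ENNReal.ofReal c * volume S := by
  have h1 : (fun x : ℝ => c * (x + d)) '' S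
      = (fun y : ℝ => c⁻¹ * y) ⁻¹' ((fun y : ℝ => y + (-d)) ⁻¹' S) := by
    ext y
    simp only [Set.mem_image, Set.mem_preimage]
    constructor
    · rintro ⟨x, hx, rfl⟩
      have : c⁻¹ * (c * (x + d)) + -d = x := by field_simp; ring
      rwa [this]
    · intro h
      exact ⟨c⁻¹ * y + -d, h, by field_simp; ring⟩
  rw [h1, Real.volume_preimage_mul_left (by positivity : c⁻¹ ≠ 0),
    measure_preimage_add_right]
  rw [inv_inv, abs_of_pos hc]

private lemma vol_affine_sub (c d : ℝ) (hc : 0 < c) (S : Set ℝ) :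
    volume ((fun x => c * (x - d)) '' S) = ENNReal.ofReal c * volume S := by
  have h : (fun x : ℝ => c * (x - d)) = fun x : ℝ => c * (x + (-d)) := by
    funext x; ring
  rw [h, vol_affine c (-d) hc S]

private lemma vol_mul (c : ℝ) (hc : 0 < c) (S : Set ℝ) :
    volume ((fun x => c * x) '' S) = ENNReal.ofReal c * volume S := by
  have h : (fun x : ℝ => c * x) = fun x : ℝ => c * (x + 0) := by
    funext x; ring
  rw [h, vol_affine c 0 hc S]

set_option maxHeartbeats 4000000 in
/-- The windows of the substitution ρ̃ = (a ↦ aab, b ↦ ba) have disjoint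
interiors. -/
theorem rho_tilde_windows_disjoint_interiors (τ : ℝ) (hτ : τ = (1 + Real.sqrt 5) / 2)
    (Wa Wb : Set ℝ) (hWa : Wa.Nonempty) (hWb : Wb.Nonempty)
    (hca : IsCompact Wa) (hcb : IsCompact Wb)
    (h1 : Wa = (fun x : ℝ => (τ ^ 2)⁻¹ * x) '' Wa ∪
               (fun x : ℝ => (τ ^ 2)⁻¹ * (x - τ)) '' Wa ∪
               (fun x : ℝ => (τ ^ 2)⁻¹ * (x + τ ^ 2)) '' Wb)
    (h2 : Wb = (fun x : ℝ => (τ ^ 2)⁻¹ * (x - 2 * τ)) '' Wa ∪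
               (fun x : ℝ => (τ ^ 2)⁻¹ * x) '' Wb) :
    interior Wa ∩ interior Wb = ∅ := by
  have hs5 : Real.sqrt 5 ^ 2 = 5 := Real.sq_sqrt (by norm_num)
  have hs5nn : (0:ℝ) ≤ Real.sqrt 5 := Real.sqrt_nonneg 5
  have hs5lb : (2.2360 : ℝ) < Real.sqrt 5 := by nlinarith
  have hs5ub : Real.sqrt 5 < 2.2361 := by nlinarith
  have hτ2 : τ ^ 2 = τ + 1 := by rw [hτ]; nlinarith
  have hτlb : (1.6180 : ℝ) < τ := by rw [hτ]; linarith
  have hτub : τ < 1.61805 := by rw [hτ]; linarith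
  obtain ⟨c, hc⟩ : ∃ c : ℝ, c = (τ ^ 2)⁻¹ := ⟨_, rfl⟩
  rw [← hc] at h1 h2
  have hτ2pos : (0:ℝ) < τ ^ 2 := by positivity
  have hc0 : 0 < c := by rw [hc]; positivity
  have hcτ : c * τ ^ 2 = 1 := by rw [hc]; exact inv_mul_cancel₀ (ne_of_gt hτ2pos)
  have hcub : c ≤ 0.382 := by nlinarith
  have hclb : (0.3819:ℝ) ≤ c := by nlinarith
  have h3 : τ * τ ^ 2 = 1 + 2 * τ := by linear_combination (τ + 1) * hτ2
  have hcτ3 : c * (1 + 2 * τ) = τ := by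
    rw [← h3, show c * (τ * τ ^ 2) = (c * τ ^ 2) * τ from by ring, hcτ, one_mul]
  have hcc_ub : c * c ≤ 0.146 := by nlinarith
  have hcc_lb : (0.1458:ℝ) ≤ c * c := by nlinarith
  have hccτ_ub : c * c * τ ≤ 0.2363 := by nlinarith
  have hccτ_lb : (0.2358:ℝ) ≤ c * c * τ := by nlinarith
  -- extreme points
  obtain ⟨Ma, hMaW, hMaub⟩ := hca.exists_isGreatest hWa
  obtain ⟨Mb, hMbW, hMbub⟩ := hcb.exists_isGreatest hWb
  obtain ⟨na, hnaW, hnalb⟩ := hca.exists_isLeast hWa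
  obtain ⟨nb, hnbW, hnblb⟩ := hcb.exists_isLeast hWb
  have hA1 : Ma ≤ c * Ma ∨ Ma ≤ c * (Ma - τ) ∨ Ma ≤ c * (Mb + τ ^ 2) := by
    have hm := hMaW
    rw [h1] at hm
    rcases hm with (⟨a, ha, he⟩ | ⟨a, ha, he⟩) | ⟨b, hb, he⟩
    · have he' : c * a = Ma := he
      exact Or.inl (by nlinarith [mul_le_mul_of_nonneg_left (hMaub ha) hc0.le])
    · have he' : c * (a - τ) = Ma := he
      exact Or.inr (Or.inl (by nlinarith [mul_le_mul_of_nonneg_left (hMaub ha) hc0.le]))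
    · have he' : c * (b + τ ^ 2) = Ma := he
      exact Or.inr (Or.inr (by nlinarith [mul_le_mul_of_nonneg_left (hMbub hb) hc0.le]))
  have hB1 : Mb ≤ c * (Ma - 2 * τ) ∨ Mb ≤ c * Mb := by
    have hm := hMbW
    rw [h2] at hm
    rcases hm with ⟨a, ha, he⟩ | ⟨b, hb, he⟩
    · have he' : c * (a - 2 * τ) = Mb := he
      exact Or.inl (by nlinarith [mul_le_mul_of_nonneg_left (hMaub ha) hc0.le])
    · have he' : c * b = Mb := he
      exact Or.inr (by nlinarith [mul_le_mul_of_nonneg_left (hMbub hb) hc0.le])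
  have hA1' : c * na ≤ na ∨ c * (na - τ) ≤ na ∨ c * (nb + τ ^ 2) ≤ na := by
    have hm := hnaW
    rw [h1] at hm
    rcases hm with (⟨a, ha, he⟩ | ⟨a, ha, he⟩) | ⟨b, hb, he⟩
    · have he' : c * a = na := he
      exact Or.inl (by nlinarith [mul_le_mul_of_nonneg_left (hnalb ha) hc0.le])
    · have he' : c * (a - τ) = na := he
      exact Or.inr (Or.inl (by nlinarith [mul_le_mul_of_nonneg_left (hnalb ha) hc0.le]))
    · have he' : c * (b + τ ^ 2) = na := he
      exact Or.inr (Or.inr (by nlinarith [mul_le_mul_of_nonneg_left (hnblb hb) hc0.le]))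
  have hB1' : c * (na - 2 * τ) ≤ nb ∨ c * nb ≤ nb := by
    have hm := hnbW
    rw [h2] at hm
    rcases hm with ⟨a, ha, he⟩ | ⟨b, hb, he⟩
    · have he' : c * (a - 2 * τ) = nb := he
      exact Or.inl (by nlinarith [mul_le_mul_of_nonneg_left (hnalb ha) hc0.le])
    · have he' : c * b = nb := he
      exact Or.inr (by nlinarith [mul_le_mul_of_nonneg_left (hnblb hb) hc0.le])
  -- helper sign lemmas
  have hRle : ∀ r : ℝ, r ≤ c * r → r ≤ 0 := by
    intro r h
    by_contra hp
    push_neg at hp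
    nlinarith
  have hRge : ∀ r : ℝ, c * r ≤ r → 0 ≤ r := by
    intro r h
    by_contra hp
    push_neg at hp
    nlinarith
  -- Ma ≤ 1, Mb ≤ 0
  have hMaKey : Ma ≤ 0 ∨ Ma ≤ c * Mb + 1 := by
    rcases hA1 with h | h | h
    · exact Or.inl (hRle Ma h)
    · exact Or.inl (hRle Ma (by nlinarith))
    · exact Or.inr (by nlinarith)
  have hMapair : Ma ≤ 1 ∧ Mb ≤ 0 := by
    rcases hB1 with h | h
    · rcases hMaKey with h' | h'
      · constructor
        · linarith
        · nlinarith [mul_le_mul_of_nonneg_left (show Ma - 2*τ ≤ (0:ℝ) by linarith) hc0.le]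
      · have hMa1 : Ma ≤ 1 := by
          by_contra hp
          push_neg at hp
          have e2 : c * Mb ≤ c * (c * (Ma - 2 * τ)) := mul_le_mul_of_nonneg_left h hc0.le
          have e3 : c * (c * (Ma - 2 * τ)) = c * c * Ma - 2 * (c * c) * τ := by ring
          have e4 : c * c * Ma ≤ 0.146 * Ma :=
            mul_le_mul_of_nonneg_right hcc_ub (by linarith)
          linarith
        refine ⟨hMa1, ?_⟩
        nlinarith [mul_le_mul_of_nonneg_left (show Ma - 2*τ ≤ (0:ℝ) by linarith) hc0.le]
    · have hMb0 : Mb ≤ 0 := hRle Mb h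
      rcases hMaKey with h' | h'
      · exact ⟨by linarith, hMb0⟩
      · refine ⟨?_, hMb0⟩
        nlinarith [mul_le_mul_of_nonneg_left hMb0 hc0.le]
  obtain ⟨hMa1, hMb0⟩ := hMapair
  -- -1 ≤ na, -τ ≤ nb
  have hna1 : -1 ≤ na := by
    rcases hA1' with h' | h' | h'
    · have := hRge na h'; linarith
    · -- c * (na - τ) ≤ na  ⟹  na ≥ -1  (exact)
      have key := mul_le_mul_of_nonneg_left h' hτ2pos.le
      have e : τ ^ 2 * (c * (na - τ)) = (c * τ ^ 2) * (na - τ) := by ring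
      rw [e, hcτ, one_mul] at key
      nlinarith
    · -- na ≥ c * nb + 1
      have hna' : c * nb + 1 ≤ na := by nlinarith
      rcases hB1' with h | h
      · by_contra hp
        push_neg at hp
        have e2 : c * (c * (na - 2 * τ)) ≤ c * nb := mul_le_mul_of_nonneg_left h hc0.le
        have e3 : c * (c * (na - 2 * τ)) = c * c * na - 2 * (c * c) * τ := by ring
        have e4 : 0.146 * na ≤ c * c * na := by nlinarith
        linarith
      · have := hRge nb h
        nlinarith [mul_le_mul_of_nonneg_left this hc0.le]
  have hnbτ : -τ ≤ nb := by
    rcases hB1' with h | h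
    · have key : c * (-1 - 2 * τ) ≤ c * (na - 2 * τ) :=
        mul_le_mul_of_nonneg_left (by linarith) hc0.le
      have e : c * (-1 - 2 * τ) = -(c * (1 + 2 * τ)) := by ring
      rw [e, hcτ3] at key
      linarith
    · have := hRge nb h; linarith
  have HA : ∀ a ∈ Wa, -1 ≤ a ∧ a ≤ 1 :=
    fun a ha => ⟨le_trans hna1 (hnalb ha), le_trans (hMaub ha) hMa1⟩
  have HB : ∀ b ∈ Wb, -τ ≤ b ∧ b ≤ 0 :=
    fun b hb => ⟨le_trans hnbτ (hnblb hb), le_trans (hMbub hb) hMb0⟩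

  -- The four key sets
  -- X = Wa ∩ Wb, Y = Wa ∩ (Wa - τ), Z = Wa ∩ (Wb + τ), W = Wa ∩ (Wa - 1)
  -- Inclusion I
  have incI : Wa ∩ Wb ⊆
      (fun x => c * x) '' (Wa ∩ Wb) ∪
      (fun x => c * (x - τ)) '' (Wa ∩ ((fun x : ℝ => x - τ) '' Wa)) ∪
      (fun x => c * (x - τ)) '' (Wa ∩ ((fun x : ℝ => x + τ) '' Wb)) := by
    rintro p ⟨hpa, hpb⟩
    rw [h1] at hpa
    rw [h2] at hpb
    rcases hpa with (⟨a, ha, hea⟩ | ⟨a, ha, hea⟩) | ⟨b, hb, hea⟩ <;>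
      rcases hpb with ⟨a', ha', heb⟩ | ⟨b', hb', heb⟩
    · have ea : c * a = p := hea
      have eb : c * (a' - 2 * τ) = p := heb
      have e : a = a' - 2 * τ := mul_left_cancel₀ hc0.ne' (by linarith)
      exact absurd e (by have := (HA a ha).1; have := (HA a' ha').2; intro e; linarith)
    · have ea : c * a = p := hea
      have eb : c * b' = p := heb
      have e : a = b' := mul_left_cancel₀ hc0.ne' (by linarith)
      exact Or.inl (Or.inl ⟨a, ⟨ha, by rw [e]; exact hb'⟩, hea⟩)
    · have ea : c * (a - τ) = p := hea
      have eb : c * (a' - 2 * τ) = p := heb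
      have e : a - τ = a' - 2 * τ := mul_left_cancel₀ hc0.ne' (by linarith)
      exact Or.inl (Or.inr ⟨a, ⟨ha, ⟨a', ha', by show a' - τ = a; linarith⟩⟩, hea⟩)
    · have ea : c * (a - τ) = p := hea
      have eb : c * b' = p := heb
      have e : a - τ = b' := mul_left_cancel₀ hc0.ne' (by linarith)
      exact Or.inr ⟨a, ⟨ha, ⟨b', hb', by show b' + τ = a; linarith⟩⟩, hea⟩
    · have ea : c * (b + τ ^ 2) = p := hea
      have eb : c * (a' - 2 * τ) = p := heb
      have e : b + τ ^ 2 = a' - 2 * τ := mul_left_cancel₀ hc0.ne' (by linarith)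
      exact absurd e (by have := (HB b hb).1; have := (HA a' ha').2; intro e; linarith)
    · have ea : c * (b + τ ^ 2) = p := hea
      have eb : c * b' = p := heb
      have e : b + τ ^ 2 = b' := mul_left_cancel₀ hc0.ne' (by linarith)
      exact absurd e (by have := (HB b hb).1; have := (HB b' hb').2; intro e; linarith)
  -- Inclusion II
  have incII : Wa ∩ ((fun x : ℝ => x - τ) '' Wa) ⊆
      (fun x => c * (x - τ)) '' (Wa ∩ Wb) := by
    rintro p ⟨hpa, r, hr, hrq⟩
    have hrq' : r - τ = p := hrq
    have hq : p + τ ∈ Wa := by rw [show p + τ = r by linarith]; exact hr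
    rw [h1] at hpa hq
    rcases hpa with (⟨a, ha, hea⟩ | ⟨a, ha, hea⟩) | ⟨b, hb, hea⟩ <;>
      rcases hq with (⟨a2, ha2, heb⟩ | ⟨a2, ha2, heb⟩) | ⟨b2, hb2, heb⟩
    · have ea : c * a = p := hea
      have eb : c * a2 = p + τ := heb
      have e : a2 = a + (1 + 2 * τ) := mul_left_cancel₀ hc0.ne' (by linarith [hcτ3])
      exact absurd e (by have := (HA a ha).1; have := (HA a2 ha2).2; intro e; linarith)
    · have ea : c * a = p := hea
      have eb : c * (a2 - τ) = p + τ := heb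
      have e : a2 - τ = a + (1 + 2 * τ) := mul_left_cancel₀ hc0.ne' (by linarith [hcτ3])
      exact absurd e (by have := (HA a ha).1; have := (HA a2 ha2).2; intro e; linarith)
    · have ea : c * a = p := hea
      have eb : c * (b2 + τ ^ 2) = p + τ := heb
      have e : b2 + τ ^ 2 = a + (1 + 2 * τ) := mul_left_cancel₀ hc0.ne' (by linarith [hcτ3])
      exact absurd e (by have := (HA a ha).1; have := (HB b2 hb2).2; intro e; linarith)
    · have ea : c * (a - τ) = p := hea
      have eb : c * a2 = p + τ := heb
      have e : a2 = (a - τ) + (1 + 2 * τ) := mul_left_cancel₀ hc0.ne' (by linarith [hcτ3])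
      exact absurd e (by have := (HA a ha).1; have := (HA a2 ha2).2; intro e; linarith)
    · have ea : c * (a - τ) = p := hea
      have eb : c * (a2 - τ) = p + τ := heb
      have e : a2 - τ = (a - τ) + (1 + 2 * τ) := mul_left_cancel₀ hc0.ne' (by linarith [hcτ3])
      exact absurd e (by have := (HA a ha).1; have := (HA a2 ha2).2; intro e; linarith)
    · have ea : c * (a - τ) = p := hea
      have eb : c * (b2 + τ ^ 2) = p + τ := heb
      have e : b2 + τ ^ 2 = (a - τ) + (1 + 2 * τ) := mul_left_cancel₀ hc0.ne' (by linarith [hcτ3])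
      have eb2 : b2 = a := by linarith [hτ2]
      exact ⟨a, ⟨ha, by rw [← eb2]; exact hb2⟩, hea⟩
    · have ea : c * (b + τ ^ 2) = p := hea
      have eb : c * a2 = p + τ := heb
      have e : a2 = (b + τ ^ 2) + (1 + 2 * τ) := mul_left_cancel₀ hc0.ne' (by linarith [hcτ3])
      exact absurd e (by have := (HB b hb).1; have := (HA a2 ha2).2; intro e; linarith)
    · have ea : c * (b + τ ^ 2) = p := hea
      have eb : c * (a2 - τ) = p + τ := heb
      have e : a2 - τ = (b + τ ^ 2) + (1 + 2 * τ) := mul_left_cancel₀ hc0.ne' (by linarith [hcτ3])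
      exact absurd e (by have := (HB b hb).1; have := (HA a2 ha2).2; intro e; linarith)
    · have ea : c * (b + τ ^ 2) = p := hea
      have eb : c * (b2 + τ ^ 2) = p + τ := heb
      have e : b2 + τ ^ 2 = (b + τ ^ 2) + (1 + 2 * τ) := mul_left_cancel₀ hc0.ne' (by linarith [hcτ3])
      exact absurd e (by have := (HB b hb).1; have := (HB b2 hb2).2; intro e; linarith)
  -- Inclusion III
  have incIII : Wa ∩ ((fun x : ℝ => x + τ) '' Wb) ⊆
      (fun x => c * (x + 1)) '' (Wa ∩ ((fun x : ℝ => x - 1) '' Wa)) ∪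
      (fun x => c * (x + 1)) '' (Wa ∩ ((fun x : ℝ => x + τ) '' Wb)) ∪ {(1:ℝ)} := by
    rintro p ⟨hpa, r, hr, hrq⟩
    have hrq' : r + τ = p := hrq
    have hq : p - τ ∈ Wb := by rw [show p - τ = r by linarith]; exact hr
    rw [h1] at hpa
    rw [h2] at hq
    rcases hpa with (⟨a, ha, hea⟩ | ⟨a, ha, hea⟩) | ⟨b, hb, hea⟩ <;>
      rcases hq with ⟨a2, ha2, heb⟩ | ⟨b2, hb2, heb⟩
    · have ea : c * a = p := hea
      have eb : c * (a2 - 2 * τ) = p - τ := heb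
      have e : a2 - 2 * τ = a - (1 + 2 * τ) := mul_left_cancel₀ hc0.ne' (by linarith [hcτ3])
      have e' : a2 = a - 1 := by linarith
      refine Or.inl (Or.inl ⟨a - 1, ⟨by rw [← e']; exact ha2, ⟨a, ha, rfl⟩⟩, ?_⟩)
      show c * (a - 1 + 1) = p
      rw [show a - 1 + 1 = a by ring]
      exact ea
    · have ea : c * a = p := hea
      have eb : c * b2 = p - τ := heb
      have e : b2 = a - (1 + 2 * τ) := mul_left_cancel₀ hc0.ne' (by linarith [hcτ3])
      exact absurd e (by have := (HB b2 hb2).1; have := (HA a ha).2; intro e; linarith)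
    · have ea : c * (a - τ) = p := hea
      have eb : c * (a2 - 2 * τ) = p - τ := heb
      have e : a2 - 2 * τ = (a - τ) - (1 + 2 * τ) := mul_left_cancel₀ hc0.ne' (by linarith [hcτ3])
      exact absurd e (by have := (HA a2 ha2).1; have := (HA a ha).2; intro e; linarith)
    · have ea : c * (a - τ) = p := hea
      have eb : c * b2 = p - τ := heb
      have e : b2 = (a - τ) - (1 + 2 * τ) := mul_left_cancel₀ hc0.ne' (by linarith [hcτ3])
      exact absurd e (by have := (HB b2 hb2).1; have := (HA a ha).2; intro e; linarith)
    · have ea : c * (b + τ ^ 2) = p := hea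
      have eb : c * (a2 - 2 * τ) = p - τ := heb
      have e : a2 - 2 * τ = (b + τ ^ 2) - (1 + 2 * τ) := mul_left_cancel₀ hc0.ne' (by linarith [hcτ3])
      have e' : b + τ = a2 := by have := hτ2; linarith
      refine Or.inl (Or.inr ⟨a2, ⟨ha2, ⟨b, hb, e'⟩⟩, ?_⟩)
      show c * (a2 + 1) = p
      rw [show a2 + 1 = b + τ ^ 2 by have := hτ2; linarith]
      exact hea
    · have ea : c * (b + τ ^ 2) = p := hea
      have eb : c * b2 = p - τ := heb
      have e : b2 = (b + τ ^ 2) - (1 + 2 * τ) := mul_left_cancel₀ hc0.ne' (by linarith [hcτ3])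
      have hb0 : b = 0 := le_antisymm (HB b hb).2
        (by have := (HB b2 hb2).1; have := hτ2; linarith)
      have hp1 : p = 1 := by rw [← ea, hb0, zero_add]; exact hcτ
      exact Or.inr (by rw [Set.mem_singleton_iff]; exact hp1)
  -- Inclusion IV
  have incIV : Wa ∩ ((fun x : ℝ => x - 1) '' Wa) ⊆
      (fun x => c * x) '' (Wa ∩ Wb) ∪
      (fun x => c * (x - τ)) '' (Wa ∩ ((fun x : ℝ => x - 1) '' Wa)) ∪
      (fun x => c * (x - τ)) '' (Wa ∩ ((fun x : ℝ => x + τ) '' Wb)) := by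
    rintro p ⟨hpa, r, hr, hrq⟩
    have hrq' : r - 1 = p := hrq
    have hq : p + 1 ∈ Wa := by rw [show p + 1 = r by linarith]; exact hr
    rw [h1] at hpa hq
    rcases hpa with (⟨a, ha, hea⟩ | ⟨a, ha, hea⟩) | ⟨b, hb, hea⟩ <;>
      rcases hq with (⟨a2, ha2, heb⟩ | ⟨a2, ha2, heb⟩) | ⟨b2, hb2, heb⟩
    · have ea : c * a = p := hea
      have eb : c * a2 = p + 1 := heb
      have e : a2 = a + τ ^ 2 := mul_left_cancel₀ hc0.ne' (by linarith [hcτ])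
      exact absurd e (by have := (HA a ha).1; have := (HA a2 ha2).2; have := hτ2; intro e; linarith)
    · have ea : c * a = p := hea
      have eb : c * (a2 - τ) = p + 1 := heb
      have e : a2 - τ = a + τ ^ 2 := mul_left_cancel₀ hc0.ne' (by linarith [hcτ])
      exact absurd e (by have := (HA a ha).1; have := (HA a2 ha2).2; have := hτ2; intro e; linarith)
    · have ea : c * a = p := hea
      have eb : c * (b2 + τ ^ 2) = p + 1 := heb
      have e : b2 + τ ^ 2 = a + τ ^ 2 := mul_left_cancel₀ hc0.ne' (by linarith [hcτ])
      exact Or.inl (Or.inl ⟨a, ⟨ha, by rw [show a = b2 by linarith]; exact hb2⟩, hea⟩)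
    · have ea : c * (a - τ) = p := hea
      have eb : c * a2 = p + 1 := heb
      have e : a2 = (a - τ) + τ ^ 2 := mul_left_cancel₀ hc0.ne' (by linarith [hcτ])
      refine Or.inl (Or.inr ⟨a, ⟨ha, ⟨a2, ha2, ?_⟩⟩, hea⟩)
      show a2 - 1 = a
      have := hτ2; linarith
    · have ea : c * (a - τ) = p := hea
      have eb : c * (a2 - τ) = p + 1 := heb
      have e : a2 - τ = (a - τ) + τ ^ 2 := mul_left_cancel₀ hc0.ne' (by linarith [hcτ])
      exact absurd e (by have := (HA a ha).1; have := (HA a2 ha2).2; have := hτ2; intro e; linarith)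
    · have ea : c * (a - τ) = p := hea
      have eb : c * (b2 + τ ^ 2) = p + 1 := heb
      have e : b2 + τ ^ 2 = (a - τ) + τ ^ 2 := mul_left_cancel₀ hc0.ne' (by linarith [hcτ])
      refine Or.inr ⟨a, ⟨ha, ⟨b2, hb2, ?_⟩⟩, hea⟩
      show b2 + τ = a
      linarith
    · have ea : c * (b + τ ^ 2) = p := hea
      have eb : c * a2 = p + 1 := heb
      have e : a2 = (b + τ ^ 2) + τ ^ 2 := mul_left_cancel₀ hc0.ne' (by linarith [hcτ])
      exact absurd e (by have := (HB b hb).1; have := (HA a2 ha2).2; have := hτ2; intro e; linarith)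
    · have ea : c * (b + τ ^ 2) = p := hea
      have eb : c * (a2 - τ) = p + 1 := heb
      have e : a2 - τ = (b + τ ^ 2) + τ ^ 2 := mul_left_cancel₀ hc0.ne' (by linarith [hcτ])
      exact absurd e (by have := (HB b hb).1; have := (HA a2 ha2).2; have := hτ2; intro e; linarith)
    · have ea : c * (b + τ ^ 2) = p := hea
      have eb : c * (b2 + τ ^ 2) = p + 1 := heb
      have e : b2 + τ ^ 2 = (b + τ ^ 2) + τ ^ 2 := mul_left_cancel₀ hc0.ne' (by linarith [hcτ])
      exact absurd e (by have := (HB b hb).1; have := (HB b2 hb2).2; have := hτ2; intro e; linarith)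
  -- Measure inequalities
  have finWa : volume Wa ≠ ⊤ := hca.measure_lt_top.ne
  have finX : volume (Wa ∩ Wb) ≠ ⊤ :=
    ne_top_of_le_ne_top finWa (measure_mono inter_subset_left)
  have finY : volume (Wa ∩ ((fun x : ℝ => x - τ) '' Wa)) ≠ ⊤ :=
    ne_top_of_le_ne_top finWa (measure_mono inter_subset_left)
  have finZ : volume (Wa ∩ ((fun x : ℝ => x + τ) '' Wb)) ≠ ⊤ :=
    ne_top_of_le_ne_top finWa (measure_mono inter_subset_left)
  have finW : volume (Wa ∩ ((fun x : ℝ => x - 1) '' Wa)) ≠ ⊤ :=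
    ne_top_of_le_ne_top finWa (measure_mono inter_subset_left)
  obtain ⟨x, hx⟩ : ∃ x : ℝ, x = (volume (Wa ∩ Wb)).toReal := ⟨_, rfl⟩
  obtain ⟨y, hy⟩ : ∃ y : ℝ, y = (volume (Wa ∩ ((fun x : ℝ => x - τ) '' Wa))).toReal := ⟨_, rfl⟩
  obtain ⟨z, hz⟩ : ∃ z : ℝ, z = (volume (Wa ∩ ((fun x : ℝ => x + τ) '' Wb))).toReal := ⟨_, rfl⟩
  obtain ⟨w, hw⟩ : ∃ w : ℝ, w = (volume (Wa ∩ ((fun x : ℝ => x - 1) '' Wa))).toReal := ⟨_, rfl⟩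
  have hx0 : 0 ≤ x := hx ▸ ENNReal.toReal_nonneg
  have hy0 : 0 ≤ y := hy ▸ ENNReal.toReal_nonneg
  have hz0 : 0 ≤ z := hz ▸ ENNReal.toReal_nonneg
  have hw0 : 0 ≤ w := hw ▸ ENNReal.toReal_nonneg
  have vX : volume (Wa ∩ Wb) = ENNReal.ofReal x := by
    rw [hx, ENNReal.ofReal_toReal finX]
  have vY : volume (Wa ∩ ((fun x : ℝ => x - τ) '' Wa)) = ENNReal.ofReal y := by
    rw [hy, ENNReal.ofReal_toReal finY]
  have vZ : volume (Wa ∩ ((fun x : ℝ => x + τ) '' Wb)) = ENNReal.ofReal z := by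
    rw [hz, ENNReal.ofReal_toReal finZ]
  have vW : volume (Wa ∩ ((fun x : ℝ => x - 1) '' Wa)) = ENNReal.ofReal w := by
    rw [hw, ENNReal.ofReal_toReal finW]
  -- inequality I
  have rI : x ≤ c * x + c * y + c * z := by
    have mI : volume (Wa ∩ Wb) ≤
        ENNReal.ofReal c * volume (Wa ∩ Wb) +
        ENNReal.ofReal c * volume (Wa ∩ ((fun x : ℝ => x - τ) '' Wa)) +
        ENNReal.ofReal c * volume (Wa ∩ ((fun x : ℝ => x + τ) '' Wb)) := by
      calc volume (Wa ∩ Wb)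
          ≤ volume ((fun x => c * x) '' (Wa ∩ Wb) ∪
              (fun x => c * (x - τ)) '' (Wa ∩ ((fun x : ℝ => x - τ) '' Wa)) ∪
              (fun x => c * (x - τ)) '' (Wa ∩ ((fun x : ℝ => x + τ) '' Wb))) :=
            measure_mono incI
        _ ≤ volume ((fun x => c * x) '' (Wa ∩ Wb) ∪
              (fun x => c * (x - τ)) '' (Wa ∩ ((fun x : ℝ => x - τ) '' Wa))) +
            volume ((fun x => c * (x - τ)) '' (Wa ∩ ((fun x : ℝ => x + τ) '' Wb))) :=
            measure_union_le _ _
        _ ≤ volume ((fun x => c * x) '' (Wa ∩ Wb)) +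
            volume ((fun x => c * (x - τ)) '' (Wa ∩ ((fun x : ℝ => x - τ) '' Wa))) +
            volume ((fun x => c * (x - τ)) '' (Wa ∩ ((fun x : ℝ => x + τ) '' Wb))) :=
            add_le_add (measure_union_le _ _) le_rfl
        _ = _ := by
            rw [vol_mul c hc0, vol_affine_sub c τ hc0, vol_affine_sub c τ hc0]
    rw [vX, vY, vZ, ← ENNReal.ofReal_mul hc0.le, ← ENNReal.ofReal_mul hc0.le,
      ← ENNReal.ofReal_mul hc0.le,
      ← ENNReal.ofReal_add (mul_nonneg hc0.le hx0) (mul_nonneg hc0.le hy0),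
      ← ENNReal.ofReal_add (add_nonneg (mul_nonneg hc0.le hx0) (mul_nonneg hc0.le hy0))
        (mul_nonneg hc0.le hz0)] at mI
    exact (ENNReal.ofReal_le_ofReal_iff
      (add_nonneg (add_nonneg (mul_nonneg hc0.le hx0) (mul_nonneg hc0.le hy0))
        (mul_nonneg hc0.le hz0))).1 mI
  -- inequality II
  have rII : y ≤ c * x := by
    have mII : volume (Wa ∩ ((fun x : ℝ => x - τ) '' Wa)) ≤
        ENNReal.ofReal c * volume (Wa ∩ Wb) := by
      calc volume (Wa ∩ ((fun x : ℝ => x - τ) '' Wa))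
          ≤ volume ((fun x => c * (x - τ)) '' (Wa ∩ Wb)) := measure_mono incII
        _ = _ := vol_affine_sub c τ hc0 _
    rw [vX, vY, ← ENNReal.ofReal_mul hc0.le] at mII
    exact (ENNReal.ofReal_le_ofReal_iff (mul_nonneg hc0.le hx0)).1 mII
  -- inequality III
  have rIII : z ≤ c * w + c * z := by
    have mIII : volume (Wa ∩ ((fun x : ℝ => x + τ) '' Wb)) ≤
        ENNReal.ofReal c * volume (Wa ∩ ((fun x : ℝ => x - 1) '' Wa)) +
        ENNReal.ofReal c * volume (Wa ∩ ((fun x : ℝ => x + τ) '' Wb)) := by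
      calc volume (Wa ∩ ((fun x : ℝ => x + τ) '' Wb))
          ≤ volume ((fun x => c * (x + 1)) '' (Wa ∩ ((fun x : ℝ => x - 1) '' Wa)) ∪
              (fun x => c * (x + 1)) '' (Wa ∩ ((fun x : ℝ => x + τ) '' Wb)) ∪ {(1:ℝ)}) :=
            measure_mono incIII
        _ ≤ volume ((fun x => c * (x + 1)) '' (Wa ∩ ((fun x : ℝ => x - 1) '' Wa)) ∪
              (fun x => c * (x + 1)) '' (Wa ∩ ((fun x : ℝ => x + τ) '' Wb))) +
            volume ({(1:ℝ)} : Set ℝ) := measure_union_le _ _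
        _ = volume ((fun x => c * (x + 1)) '' (Wa ∩ ((fun x : ℝ => x - 1) '' Wa)) ∪
              (fun x => c * (x + 1)) '' (Wa ∩ ((fun x : ℝ => x + τ) '' Wb))) := by
            rw [Real.volume_singleton, add_zero]
        _ ≤ volume ((fun x => c * (x + 1)) '' (Wa ∩ ((fun x : ℝ => x - 1) '' Wa))) +
            volume ((fun x => c * (x + 1)) '' (Wa ∩ ((fun x : ℝ => x + τ) '' Wb))) :=
            measure_union_le _ _
        _ = _ := by rw [vol_affine c 1 hc0, vol_affine c 1 hc0]
    rw [vZ, vW, ← ENNReal.ofReal_mul hc0.le, ← ENNReal.ofReal_mul hc0.le,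
      ← ENNReal.ofReal_add (mul_nonneg hc0.le hw0) (mul_nonneg hc0.le hz0)] at mIII
    exact (ENNReal.ofReal_le_ofReal_iff
      (add_nonneg (mul_nonneg hc0.le hw0) (mul_nonneg hc0.le hz0))).1 mIII
  -- inequality IV
  have rIV : w ≤ c * x + c * w + c * z := by
    have mIV : volume (Wa ∩ ((fun x : ℝ => x - 1) '' Wa)) ≤
        ENNReal.ofReal c * volume (Wa ∩ Wb) +
        ENNReal.ofReal c * volume (Wa ∩ ((fun x : ℝ => x - 1) '' Wa)) +
        ENNReal.ofReal c * volume (Wa ∩ ((fun x : ℝ => x + τ) '' Wb)) := by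
      calc volume (Wa ∩ ((fun x : ℝ => x - 1) '' Wa))
          ≤ volume ((fun x => c * x) '' (Wa ∩ Wb) ∪
              (fun x => c * (x - τ)) '' (Wa ∩ ((fun x : ℝ => x - 1) '' Wa)) ∪
              (fun x => c * (x - τ)) '' (Wa ∩ ((fun x : ℝ => x + τ) '' Wb))) :=
            measure_mono incIV
        _ ≤ volume ((fun x => c * x) '' (Wa ∩ Wb) ∪
              (fun x => c * (x - τ)) '' (Wa ∩ ((fun x : ℝ => x - 1) '' Wa))) +
            volume ((fun x => c * (x - τ)) '' (Wa ∩ ((fun x : ℝ => x + τ) '' Wb))) :=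
            measure_union_le _ _
        _ ≤ volume ((fun x => c * x) '' (Wa ∩ Wb)) +
            volume ((fun x => c * (x - τ)) '' (Wa ∩ ((fun x : ℝ => x - 1) '' Wa))) +
            volume ((fun x => c * (x - τ)) '' (Wa ∩ ((fun x : ℝ => x + τ) '' Wb))) :=
            add_le_add (measure_union_le _ _) le_rfl
        _ = _ := by
            rw [vol_mul c hc0, vol_affine_sub c τ hc0, vol_affine_sub c τ hc0]
    rw [vX, vZ, vW, ← ENNReal.ofReal_mul hc0.le, ← ENNReal.ofReal_mul hc0.le,
      ← ENNReal.ofReal_mul hc0.le,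
      ← ENNReal.ofReal_add (mul_nonneg hc0.le hx0) (mul_nonneg hc0.le hw0),
      ← ENNReal.ofReal_add (add_nonneg (mul_nonneg hc0.le hx0) (mul_nonneg hc0.le hw0))
        (mul_nonneg hc0.le hz0)] at mIV
    exact (ENNReal.ofReal_le_ofReal_iff
      (add_nonneg (add_nonneg (mul_nonneg hc0.le hx0) (mul_nonneg hc0.le hw0))
        (mul_nonneg hc0.le hz0))).1 mIV
  -- conclude x = 0
  have b1 : c * x ≤ 0.382 * x := mul_le_mul_of_nonneg_right hcub hx0
  have b2 : c * y ≤ 0.382 * y := mul_le_mul_of_nonneg_right hcub hy0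
  have b3 : c * z ≤ 0.382 * z := mul_le_mul_of_nonneg_right hcub hz0
  have b4 : c * w ≤ 0.382 * w := mul_le_mul_of_nonneg_right hcub hw0
  have hxle : x ≤ 0 := by linarith
  have hXvol : volume (Wa ∩ Wb) = 0 := by
    rw [vX, le_antisymm hxle hx0, ENNReal.ofReal_zero]
  -- conclusion
  rw [← Set.not_nonempty_iff_eq_empty]
  rintro ⟨q, hq⟩
  have hopen : IsOpen (interior Wa ∩ interior Wb) := isOpen_interior.inter isOpen_interior
  have hpos : 0 < volume (interior Wa ∩ interior Wb) :=
    hopen.measure_pos volume ⟨q, hq⟩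
  have hle : volume (interior Wa ∩ interior Wb) ≤ volume (Wa ∩ Wb) :=
    measure_mono (inter_subset_inter interior_subset interior_subset)
  rw [hXvol] at hle
  exact absurd (lt_of_lt_of_le hpos hle) (lt_irrefl 0)
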